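/- With the oracle quantities defined from θ ∈ ℝ^p, T_I ∈ ℝ^{p×p_I}, T_J ∈ ℝ^{p×p_J}, σ_I > 0, σ_J > 0 via the block inverse of K = [[Σ̃_I, T_IJ],[T_JI, Σ̃_J]], the following identity holds: Σ̃_I⁻¹T_IJθ̄*_J + θ̄*_I = θ*_I; equivalently, Σ̃_I⁻¹T_IJθ̄*_J − (θ*_I − θ̄*_I) = 0. -/

import Mathlib

open Matrix

namespace MetaFusionStmt8

variable {p pI pJ : ℕ}

/-- The oracle covariance block matrix `K = [[Σ̃_I, T_IJ], [T_JI, Σ̃_J]]` with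
`Σ̃_I = T_Iᵀ T_I + σ_I² I` and `Σ̃_J = T_Jᵀ T_J + σ_J² I`. -/
noncomputable def oracleK (TI : Matrix (Fin p) (Fin pI) ℝ) (TJ : Matrix (Fin p) (Fin pJ) ℝ)
    (σI σJ : ℝ) : Matrix (Fin pI ⊕ Fin pJ) (Fin pI ⊕ Fin pJ) ℝ :=
  Matrix.fromBlocks (TIᵀ * TI + σI ^ 2 • 1) (TIᵀ * TJ) (TJᵀ * TI) (TJᵀ * TJ + σJ ^ 2 • 1)

/-- Block `A` of `K⁻¹`. -/
noncomputable def oracleA (TI : Matrix (Fin p) (Fin pI) ℝ) (TJ : Matrix (Fin p) (Fin pJ) ℝ)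
    (σI σJ : ℝ) : Matrix (Fin pI) (Fin pI) ℝ := ((oracleK TI TJ σI σJ)⁻¹).toBlocks₁₁

/-- Block `B` of `K⁻¹`. -/
noncomputable def oracleB (TI : Matrix (Fin p) (Fin pI) ℝ) (TJ : Matrix (Fin p) (Fin pJ) ℝ)
    (σI σJ : ℝ) : Matrix (Fin pI) (Fin pJ) ℝ := ((oracleK TI TJ σI σJ)⁻¹).toBlocks₁₂

/-- Block `C` of `K⁻¹`. -/
noncomputable def oracleC (TI : Matrix (Fin p) (Fin pI) ℝ) (TJ : Matrix (Fin p) (Fin pJ) ℝ)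
    (σI σJ : ℝ) : Matrix (Fin pJ) (Fin pI) ℝ := ((oracleK TI TJ σI σJ)⁻¹).toBlocks₂₁

/-- Block `D` of `K⁻¹`. -/
noncomputable def oracleD (TI : Matrix (Fin p) (Fin pI) ℝ) (TJ : Matrix (Fin p) (Fin pJ) ℝ)
    (σI σJ : ℝ) : Matrix (Fin pJ) (Fin pJ) ℝ := ((oracleK TI TJ σI σJ)⁻¹).toBlocks₂₂

/-- Oracle coefficient `θ̄*_I = (Aᵀ T_Iᵀ + Cᵀ T_Jᵀ) θ`. -/
noncomputable def thetaBarI (θ : Fin p → ℝ) (TI : Matrix (Fin p) (Fin pI) ℝ)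
    (TJ : Matrix (Fin p) (Fin pJ) ℝ) (σI σJ : ℝ) : Fin pI → ℝ :=
  ((oracleA TI TJ σI σJ)ᵀ * TIᵀ + (oracleC TI TJ σI σJ)ᵀ * TJᵀ) *ᵥ θ

/-- Oracle coefficient `θ̄*_J = (Bᵀ T_Iᵀ + Dᵀ T_Jᵀ) θ`. -/
noncomputable def thetaBarJ (θ : Fin p → ℝ) (TI : Matrix (Fin p) (Fin pI) ℝ)
    (TJ : Matrix (Fin p) (Fin pJ) ℝ) (σI σJ : ℝ) : Fin pJ → ℝ :=
  ((oracleB TI TJ σI σJ)ᵀ * TIᵀ + (oracleD TI TJ σI σJ)ᵀ * TJᵀ) *ᵥ θ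

/-- Oracle coefficient `θ*_I = Σ̃_I⁻¹ T_Iᵀ θ`. -/
noncomputable def thetaStarI (θ : Fin p → ℝ) (TI : Matrix (Fin p) (Fin pI) ℝ)
    (σI : ℝ) : Fin pI → ℝ :=
  (TIᵀ * TI + σI ^ 2 • 1)⁻¹ *ᵥ (TIᵀ *ᵥ θ)

/-- The oracle coefficients satisfy
`Σ̃_I⁻¹ T_IJ θ̄*_J + θ̄*_I = θ*_I`; equivalently
`Σ̃_I⁻¹ T_IJ θ̄*_J − (θ*_I − θ̄*_I) = 0`. -/
theorem oracle_coeff_relation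
    (hp : 0 < p) (hpI : 0 < pI) (hpJ : 0 < pJ)
    (θ : Fin p → ℝ) (TI : Matrix (Fin p) (Fin pI) ℝ) (TJ : Matrix (Fin p) (Fin pJ) ℝ)
    (σI σJ : ℝ) (hσI : 0 < σI) (hσJ : 0 < σJ) :
    (TIᵀ * TI + σI ^ 2 • 1)⁻¹ *ᵥ ((TIᵀ * TJ) *ᵥ thetaBarJ θ TI TJ σI σJ)
        + thetaBarI θ TI TJ σI σJ = thetaStarI θ TI σI ∧
    (TIᵀ * TI + σI ^ 2 • 1)⁻¹ *ᵥ ((TIᵀ * TJ) *ᵥ thetaBarJ θ TI TJ σI σJ)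
        - (thetaStarI θ TI σI - thetaBarI θ TI TJ σI σJ) = 0 := by
  set SI : Matrix (Fin pI) (Fin pI) ℝ := TIᵀ * TI + σI ^ 2 • 1 with hSIdef
  set SJ : Matrix (Fin pJ) (Fin pJ) ℝ := TJᵀ * TJ + σJ ^ 2 • 1 with hSJdef
  set A := oracleA TI TJ σI σJ
  set B := oracleB TI TJ σI σJ
  set C := oracleC TI TJ σI σJ
  set D := oracleD TI TJ σI σJ
  -- SI is positive definite
  have hsemI : (TIᵀ * TI).PosSemidef := by
    have := Matrix.posSemidef_conjTranspose_mul_self TI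
    rwa [Matrix.conjTranspose_eq_transpose_of_trivial] at this
  have hσI2 : (0 : ℝ) < σI ^ 2 := by positivity
  have hdiagI : ((σI ^ 2 : ℝ) • (1 : Matrix (Fin pI) (Fin pI) ℝ)).PosDef := by
    rw [Matrix.smul_one_eq_diagonal]
    exact Matrix.posDef_diagonal_iff.mpr fun _ => hσI2
  have hSI : SI.PosDef := Matrix.PosDef.posSemidef_add hsemI hdiagI
  have hSIdet : IsUnit SI.det := (Matrix.isUnit_iff_isUnit_det _).mp hSI.isUnit
  -- K is positive definite
  have hKeq : oracleK TI TJ σI σJ =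
      (Matrix.fromCols TI TJ)ᵀ * Matrix.fromCols TI TJ +
        Matrix.fromBlocks ((σI ^ 2 : ℝ) • 1) 0 0 ((σJ ^ 2 : ℝ) • 1) := by
    rw [Matrix.transpose_fromCols, Matrix.fromRows_mul_fromCols, oracleK,
      Matrix.fromBlocks_add]
    simp
  have hKpos : (oracleK TI TJ σI σJ).PosDef := by
    rw [hKeq]
    have hsem : ((Matrix.fromCols TI TJ)ᵀ * Matrix.fromCols TI TJ).PosSemidef := by
      have := Matrix.posSemidef_conjTranspose_mul_self (Matrix.fromCols TI TJ)
      rwa [Matrix.conjTranspose_eq_transpose_of_trivial] at this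
    have hdiag : (Matrix.fromBlocks ((σI ^ 2 : ℝ) • (1 : Matrix (Fin pI) (Fin pI) ℝ)) 0 0
        ((σJ ^ 2 : ℝ) • (1 : Matrix (Fin pJ) (Fin pJ) ℝ))).PosDef := by
      rw [Matrix.smul_one_eq_diagonal, Matrix.smul_one_eq_diagonal, Matrix.fromBlocks_diagonal]
      refine Matrix.posDef_diagonal_iff.mpr ?_
      rintro (i | i) <;> simp only [Sum.elim_inl, Sum.elim_inr] <;> positivity
    exact Matrix.PosDef.posSemidef_add hsem hdiag
  have hKdet : IsUnit (oracleK TI TJ σI σJ).det :=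
    (Matrix.isUnit_iff_isUnit_det _).mp hKpos.isUnit
  -- block representation of K⁻¹
  have hinv : (oracleK TI TJ σI σJ)⁻¹ = Matrix.fromBlocks A B C D :=
    (Matrix.fromBlocks_toBlocks _).symm
  -- K * K⁻¹ = 1 gives block equations
  have hKK : oracleK TI TJ σI σJ * (oracleK TI TJ σI σJ)⁻¹ = 1 :=
    Matrix.mul_nonsing_inv _ hKdet
  rw [hinv, oracleK, Matrix.fromBlocks_multiply, ← Matrix.fromBlocks_one] at hKK
  rw [Matrix.fromBlocks_inj] at hKK
  obtain ⟨h11, h12, -, -⟩ := hKK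
  -- symmetry of K⁻¹
  have hsym : (Matrix.fromBlocks A B C D)ᵀ = Matrix.fromBlocks A B C D := by
    rw [← hinv, ← Matrix.conjTranspose_eq_transpose_of_trivial]
    exact hKpos.isHermitian.inv
  rw [Matrix.fromBlocks_transpose, Matrix.fromBlocks_inj] at hsym
  obtain ⟨hA, hC, hB, hD⟩ := hsym
  -- key matrix identity
  have hmain : (TIᵀ * TJ) * (Bᵀ * TIᵀ + Dᵀ * TJᵀ) + SI * (Aᵀ * TIᵀ + Cᵀ * TJᵀ) = TIᵀ := by
    rw [hA, hB, hC, hD]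
    have : (TIᵀ * TJ) * (C * TIᵀ + D * TJᵀ) + SI * (A * TIᵀ + B * TJᵀ)
        = (SI * A + TIᵀ * TJ * C) * TIᵀ + (SI * B + TIᵀ * TJ * D) * TJᵀ := by
      simp only [Matrix.mul_add, Matrix.add_mul, Matrix.mul_assoc]
      abel
    rw [this, h11, h12, Matrix.one_mul, Matrix.zero_mul, add_zero]
  -- derive the vector identity
  have hMI : (Aᵀ * TIᵀ + Cᵀ * TJᵀ) *ᵥ θ
      = SI⁻¹ *ᵥ ((SI * (Aᵀ * TIᵀ + Cᵀ * TJᵀ)) *ᵥ θ) := by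
    rw [Matrix.mulVec_mulVec, ← Matrix.mul_assoc, Matrix.nonsing_inv_mul _ hSIdet,
      Matrix.one_mul]
  have key : SI⁻¹ *ᵥ ((TIᵀ * TJ) *ᵥ thetaBarJ θ TI TJ σI σJ) + thetaBarI θ TI TJ σI σJ
      = thetaStarI θ TI σI := by
    show SI⁻¹ *ᵥ ((TIᵀ * TJ) *ᵥ ((Bᵀ * TIᵀ + Dᵀ * TJᵀ) *ᵥ θ)) + (Aᵀ * TIᵀ + Cᵀ * TJᵀ) *ᵥ θ
        = SI⁻¹ *ᵥ (TIᵀ *ᵥ θ)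
    rw [hMI, ← Matrix.mulVec_add]
    congr 1
    rw [Matrix.mulVec_mulVec, ← Matrix.add_mulVec, hmain]
  exact ⟨key, by rw [← key]; abel⟩

end MetaFusionStmt8
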